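/- Let C be a compact Hausdorff space and g : C → [0,1] a continuous surjection that is irreducible (g(C') ≠ [0,1] for every proper closed subset C' ⊆ C). Then C has no isolated points, and the family N = {g⁻¹(U) : U ∈ B}, where B is a countable base of nonempty open subsets of [0,1], is a countable i-network at every point of C; hence every point of C has countable network character. -/
import Mathlib


open Set Filter Topology unitInterval

/-- if `g : C → [0,1]` is an irreducible continuous surjection from a
compact Hausdorff space, then `C` has no isolated points and, for any countable base `B`
of nonempty open subsets of `[0,1]`, the preimages `g⁻¹(B i)` form a countable i-network
at every point of `C`. -/
theorem stmt10 {C : Type*} [TopologicalSpace C] [CompactSpace C] [T2Space C]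
    (g : C → unitInterval) (hg : Continuous g) (hsurj : Function.Surjective g)
    (hirr : ∀ C' : Set C, IsClosed C' → C' ≠ Set.univ → g '' C' ≠ Set.univ)
    (B : ℕ → Set unitInterval) (hBopen : ∀ i, IsOpen (B i)) (hBne : ∀ i, (B i).Nonempty)
    (hbasis : TopologicalSpace.IsTopologicalBasis (Set.range B)) :
    (∀ c : C, ¬IsOpen ({c} : Set C)) ∧
    (∀ i, (g ⁻¹' B i).Infinite) ∧
    ∀ (c : C) (U : Set C), IsOpen U → c ∈ U → ∃ i, g ⁻¹' B i ⊆ U := by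
  haveI : Infinite unitInterval := by
    exact Set.infinite_coe_iff.mpr
      ((Set.Ioo_infinite (by norm_num : (0:ℝ) < 1)).mono Set.Ioo_subset_Icc_self)
  -- each B i is infinite
  have hBinf : ∀ i, (B i).Infinite := by
    intro i
    by_contra hfin
    rw [Set.not_infinite] at hfin
    have hclopen : IsClopen (B i) := ⟨hfin.isClosed, hBopen i⟩
    rcases isClopen_iff.mp hclopen with h | h
    · exact (hBne i).ne_empty h
    · rw [h] at hfin
      exact Set.infinite_univ hfin
  have hinf : ∀ i, (g ⁻¹' B i).Infinite := by
    intro i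
    apply Set.Infinite.of_image g
    rw [Set.image_preimage_eq _ hsurj]; exact hBinf i
  have hnet : ∀ (c : C) (U : Set C), IsOpen U → c ∈ U → ∃ i, g ⁻¹' B i ⊆ U := by
    intro c U hU hcU
    have hC' : IsClosed Uᶜ := hU.isClosed_compl
    have hne : Uᶜ ≠ Set.univ := by
      intro h
      have : c ∈ Uᶜ := h ▸ Set.mem_univ c
      exact this hcU
    have himg : g '' Uᶜ ≠ Set.univ := hirr _ hC' hne
    obtain ⟨t, ht⟩ : ∃ t, t ∉ g '' Uᶜ := by
      by_contra h
      push_neg at h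
      exact himg (Set.eq_univ_of_forall h)
    have hcomp : IsCompact (g '' Uᶜ) := (hC'.isCompact).image hg
    have hVo : IsOpen (g '' Uᶜ)ᶜ := hcomp.isClosed.isOpen_compl
    obtain ⟨s, hs, hts, hsub⟩ := hbasis.exists_subset_of_mem_open ht hVo
    obtain ⟨i, rfl⟩ := hs
    refine ⟨i, fun x hx => ?_⟩
    by_contra hxU
    exact hsub hx ⟨x, hxU, rfl⟩
  refine ⟨?_, hinf, hnet⟩
  intro c hopen
  obtain ⟨i, hi⟩ := hnet c {c} hopen rfl
  exact ((Set.finite_singleton c).subset hi).not_infinite (hinf i)
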